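/- If F : ℝ^m → ℝ is continuously differentiable at x and D ⊂ ℝ^m is a positive spanning set, and F(x) ≤ F(x + δ d) for all d ∈ D and for arbitrarily small δ > 0 (along a sequence δ_k → 0⁺), then ∇F(x) = 0. -/

import Mathlib

theorem stationary_of_unsuccessful_polling {m : ℕ}
    (F : EuclideanSpace ℝ (Fin m) → ℝ) (x : EuclideanSpace ℝ (Fin m))
    (hF : ContDiffAt ℝ 1 F x)
    (D : Finset (EuclideanSpace ℝ (Fin m)))
    (hspan : ∀ y : EuclideanSpace ℝ (Fin m),
      ∃ c : EuclideanSpace ℝ (Fin m) → ℝ,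
        (∀ d ∈ D, 0 ≤ c d) ∧ y = ∑ d ∈ D, c d • d)
    (hpoll : ∀ ε > (0 : ℝ), ∃ δ, 0 < δ ∧ δ < ε ∧
      ∀ d ∈ D, F x ≤ F (x + δ • d)) :
    fderiv ℝ F x = 0 := by
  have hdiff : HasFDerivAt F (fderiv ℝ F x) x :=
    (hF.differentiableAt one_ne_zero).hasFDerivAt
  set L := fderiv ℝ F x with hL
  -- choose sequence δ_k
  have hseq : ∀ k : ℕ, ∃ δ : ℝ, 0 < δ ∧ δ < 1 / (k + 1) ∧
      ∀ d ∈ D, F x ≤ F (x + δ • d) := by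
    intro k
    exact hpoll (1 / (k + 1)) (by positivity)
  choose δ hδpos hδlt hδpoll using hseq
  have hδ0 : Filter.Tendsto δ Filter.atTop (nhds 0) := by
    have h1 : Filter.Tendsto (fun k : ℕ => 1 / ((k : ℝ) + 1)) Filter.atTop (nhds 0) :=
      tendsto_one_div_add_atTop_nhds_zero_nat
    exact squeeze_zero (fun k => (hδpos k).le) (fun k => (hδlt k).le) h1
  have hδ0' : Filter.Tendsto δ Filter.atTop (nhdsWithin 0 {t : ℝ | t ≠ 0}) := by
    apply tendsto_nhdsWithin_of_tendsto_nhds_of_eventually_within _ hδ0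
    exact Filter.Eventually.of_forall fun k => (hδpos k).ne'
  have key : ∀ d ∈ D, 0 ≤ L d := by
    intro d hd
    have hg : HasDerivAt (fun t : ℝ => F (x + t • d)) (L d) 0 := by
      have hinner : HasDerivAt (fun t : ℝ => x + t • d) d 0 := by
        simpa using ((hasDerivAt_id (0 : ℝ)).smul_const d).const_add x
      have hdiff' : HasFDerivAt F L (x + (0:ℝ) • d) := by simpa using hdiff
      have hcomp := hdiff'.comp_hasDerivAt 0 hinner
      exact hcomp
    have hslope := hasDerivAt_iff_tendsto_slope.mp hg
    have hseq2 : Filter.Tendsto (fun k => slope (fun t : ℝ => F (x + t • d)) 0 (δ k))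
        Filter.atTop (nhds (L d)) := hslope.comp hδ0'
    refine ge_of_tendsto' hseq2 fun k => ?_
    have h1 : F x ≤ F (x + δ k • d) := hδpoll k d hd
    have : slope (fun t : ℝ => F (x + t • d)) 0 (δ k)
        = (F (x + δ k • d) - F x) / δ k := by
      simp [slope_def_field, div_eq_inv_mul]
    rw [this]
    exact div_nonneg (by linarith) (hδpos k).le
  have nonneg : ∀ y, 0 ≤ L y := by
    intro y
    obtain ⟨c, hc, hy⟩ := hspan y
    rw [hy, map_sum]
    refine Finset.sum_nonneg fun d hd => ?_
    rw [map_smul]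
    exact smul_nonneg (hc d hd) (key d hd)
  ext y
  have h1 := nonneg y
  have h2 := nonneg (-y)
  rw [map_neg] at h2
  simp only [ContinuousLinearMap.zero_apply]
  linarith
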